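/- Let ε > 0, ε̄ > 0, σ > 0, Δτ > 0 and b, x, x_k ∈ ℝ. Set a = √(1 + 2εσ²Δτ), α = a/(σ√(2Δτ)) and β = (σ²Δτ − x − 2εσ²Δτ·x_k)/(a·σ√(2Δτ)). Then the integral I_{v,1} = −∫_ℝ [1 − (1/(2ε̄))(1 − erf(ξ + b))] · exp(−ε(ξ − x_k)² − (x − ξ)²/(2σ²Δτ) − ξ)/(σ√(2πΔτ)) dξ admits the closed form I_{v,1} = −(1 − 1/(2ε̄))·I₁ − (1/(2ε̄))·I₂, where I₁ = (1/a)·exp(σ²Δτ/2 − x)·exp(−ε(x − σ²Δτ − x_k)²/a²) and I₂ = I₁ · erf((αb − β)/√(1 + α²)). (Proposition 1 of the paper.) -/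

import Mathlib

open Real MeasureTheory Filter Metric

set_option maxHeartbeats 1000000

/-- The error function `erf x = (2/√π) ∫₀ˣ e^{−t²} dt`. -/
noncomputable def erf (x : ℝ) : ℝ :=
  (2 / Real.sqrt π) * ∫ t in (0 : ℝ)..x, Real.exp (-t ^ 2)

lemma quad_sq {p : ℝ} (hp : p ≠ 0) (q r x : ℝ) :
    -p * x ^ 2 + q * x + r = -p * (x - q / (2 * p)) ^ 2 + (r + q ^ 2 / (4 * p)) := by
  field_simp; ring

lemma integrable_rexp_quad {p : ℝ} (hp : 0 < p) (q r : ℝ) :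
    Integrable fun x : ℝ => Real.exp (-p * x ^ 2 + q * x + r) := by
  simp_rw [quad_sq hp.ne' q r, Real.exp_add]
  exact ((integrable_exp_neg_mul_sq hp).comp_sub_right (q / (2 * p))).mul_const _

lemma integral_rexp_quad {p : ℝ} (hp : 0 < p) (q r : ℝ) :
    ∫ x : ℝ, Real.exp (-p * x ^ 2 + q * x + r)
      = Real.sqrt (π / p) * Real.exp (r + q ^ 2 / (4 * p)) := by
  simp_rw [quad_sq hp.ne' q r, Real.exp_add, MeasureTheory.integral_mul_const]
  rw [integral_sub_right_eq_self (fun x => Real.exp (-p * x ^ 2)) (q / (2 * p)),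
    integral_gaussian]

lemma cont_gauss : Continuous fun t : ℝ => Real.exp (-t ^ 2) := by
  fun_prop

lemma hasDerivAt_erf (x : ℝ) :
    HasDerivAt erf (2 / Real.sqrt π * Real.exp (-x ^ 2)) x := by
  have h : HasDerivAt (fun u : ℝ => ∫ t in (0 : ℝ)..u, Real.exp (-t ^ 2))
      (Real.exp (-x ^ 2)) x :=
    intervalIntegral.integral_hasDerivAt_right (cont_gauss.intervalIntegrable _ _)
      (cont_gauss.stronglyMeasurableAtFilter _ _) cont_gauss.continuousAt
  exact h.const_mul (2 / Real.sqrt π)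

lemma continuous_erf : Continuous erf :=
  continuous_iff_continuousAt.2 fun x => (hasDerivAt_erf x).continuousAt

lemma erf_neg (x : ℝ) : erf (-x) = -erf x := by
  unfold erf
  have h : ∫ t in (0:ℝ)..(-x), Real.exp (-t ^ 2)
      = - ∫ t in (0:ℝ)..x, Real.exp (-t ^ 2) := by
    have := intervalIntegral.integral_comp_neg (a := (0:ℝ)) (b := x)
      (fun t => Real.exp (-t ^ 2))
    simp only [neg_zero, neg_neg, even_two, Even.neg_pow] at this
    rw [intervalIntegral.integral_symm, ← this]
  rw [h]; ring

lemma integrableOn_gauss : IntegrableOn (fun t : ℝ => Real.exp (-t ^ 2)) (Set.Ioi 0) := by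
  have := integrable_exp_neg_mul_sq (b := (1:ℝ)) one_pos
  simpa using this.integrableOn

lemma tendsto_int_erf :
    Tendsto (fun u : ℝ => ∫ t in (0:ℝ)..u, Real.exp (-t ^ 2)) atTop
      (nhds (Real.sqrt π / 2)) := by
  have h := MeasureTheory.intervalIntegral_tendsto_integral_Ioi (μ := volume)
    (a := (0:ℝ)) integrableOn_gauss tendsto_id
  have h2 : ∫ t in Set.Ioi (0:ℝ), Real.exp (-t ^ 2) = Real.sqrt π / 2 := by
    have := integral_gaussian_Ioi 1
    simpa using this
  rwa [h2] at h

lemma tendsto_erf_atTop : Tendsto erf atTop (nhds 1) := by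
  have h := tendsto_int_erf.const_mul (2 / Real.sqrt π)
  have hπ : Real.sqrt π ≠ 0 := by positivity
  have : 2 / Real.sqrt π * (Real.sqrt π / 2) = 1 := by field_simp
  rw [this] at h
  exact h

lemma int_erf_le (u : ℝ) (hu : 0 ≤ u) :
    ∫ t in (0:ℝ)..u, Real.exp (-t ^ 2) ≤ Real.sqrt π / 2 := by
  rw [intervalIntegral.integral_of_le hu]
  have h1 : ∫ t in Set.Ioc (0:ℝ) u, Real.exp (-t ^ 2)
      ≤ ∫ t in Set.Ioi (0:ℝ), Real.exp (-t ^ 2) := by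
    apply setIntegral_mono_set integrableOn_gauss
    · filter_upwards with t using (Real.exp_pos _).le
    · exact HasSubset.Subset.eventuallyLE Set.Ioc_subset_Ioi_self
  have h2 : ∫ t in Set.Ioi (0:ℝ), Real.exp (-t ^ 2) = Real.sqrt π / 2 := by
    simpa using integral_gaussian_Ioi 1
  linarith

lemma erf_nonneg {u : ℝ} (hu : 0 ≤ u) : 0 ≤ erf u := by
  unfold erf
  have h : 0 ≤ ∫ t in (0:ℝ)..u, Real.exp (-t ^ 2) :=
    intervalIntegral.integral_nonneg hu (fun t _ => (Real.exp_pos _).le)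
  positivity

lemma erf_le_one {u : ℝ} (hu : 0 ≤ u) : erf u ≤ 1 := by
  unfold erf
  have h := int_erf_le u hu
  have hπ : 0 < Real.sqrt π := Real.sqrt_pos.2 Real.pi_pos
  calc 2 / Real.sqrt π * ∫ t in (0:ℝ)..u, Real.exp (-t ^ 2)
      ≤ 2 / Real.sqrt π * (Real.sqrt π / 2) := by
        apply mul_le_mul_of_nonneg_left h (by positivity)
    _ = 1 := by field_simp

lemma abs_erf_le_one (u : ℝ) : |erf u| ≤ 1 := by
  rcases le_or_gt 0 u with hu | hu
  · rw [abs_of_nonneg (erf_nonneg hu)]; exact erf_le_one hu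
  · have h : erf u = -erf (-u) := by rw [← erf_neg, neg_neg]
    rw [h, abs_neg, abs_of_nonneg (erf_nonneg (by linarith))]
    exact erf_le_one (by linarith)

lemma hasDerivAt_F {p : ℝ} (hp : 0 < p) (q r : ℝ) (t : ℝ) :
    HasDerivAt (fun s : ℝ => ∫ ξ : ℝ, erf (ξ + s) * Real.exp (-p * ξ ^ 2 + q * ξ + r))
      (∫ ξ : ℝ, (2 / Real.sqrt π * Real.exp (-(ξ + t) ^ 2)) *
        Real.exp (-p * ξ ^ 2 + q * ξ + r)) t := by
  set g : ℝ → ℝ := fun ξ => Real.exp (-p * ξ ^ 2 + q * ξ + r) with hgdef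
  have hg_pos : ∀ ξ, 0 < g ξ := fun ξ => Real.exp_pos _
  have hg_int : Integrable g := integrable_rexp_quad hp q r
  have hg_cont : Continuous g := by fun_prop
  have hmeas : ∀ s : ℝ, AEStronglyMeasurable (fun ξ => erf (ξ + s) * g ξ) volume :=
    fun s => ((continuous_erf.comp (continuous_id.add continuous_const)).mul
      hg_cont).aestronglyMeasurable
  have hFint : Integrable (fun ξ => erf (ξ + t) * g ξ) := by
    refine hg_int.mono' (hmeas t) ?_
    filter_upwards with ξ
    rw [norm_mul, Real.norm_eq_abs, Real.norm_eq_abs, abs_of_pos (hg_pos ξ)]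
    exact mul_le_of_le_one_left (hg_pos ξ).le (abs_erf_le_one _)
  have hF'meas : AEStronglyMeasurable
      (fun ξ : ℝ => (2 / Real.sqrt π * Real.exp (-(ξ + t) ^ 2)) * g ξ) volume := by
    apply Continuous.aestronglyMeasurable
    fun_prop
  have hbound : ∀ᵐ ξ : ℝ, ∀ s ∈ ball t 1,
      ‖(2 / Real.sqrt π * Real.exp (-(ξ + s) ^ 2)) * g ξ‖ ≤ 2 / Real.sqrt π * g ξ := by
    filter_upwards with ξ s _
    rw [norm_mul, norm_mul, Real.norm_eq_abs, Real.norm_eq_abs, Real.norm_eq_abs,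
      abs_of_pos (hg_pos ξ), abs_of_pos (Real.exp_pos _),
      abs_of_pos (show (0:ℝ) < 2 / Real.sqrt π by positivity)]
    have h2 : Real.exp (-(ξ + s) ^ 2) ≤ 1 := Real.exp_le_one_iff.2 (neg_nonpos.mpr (sq_nonneg _))
    have := mul_le_of_le_one_right (show (0:ℝ) ≤ 2 / Real.sqrt π by positivity) h2
    exact mul_le_mul_of_nonneg_right this (hg_pos ξ).le
  have hbint : Integrable (fun ξ : ℝ => 2 / Real.sqrt π * g ξ) := hg_int.const_mul _
  have hdiff : ∀ᵐ ξ : ℝ, ∀ s ∈ ball t 1,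
      HasDerivAt (fun u : ℝ => erf (ξ + u) * g ξ)
        ((2 / Real.sqrt π * Real.exp (-(ξ + s) ^ 2)) * g ξ) s := by
    filter_upwards with ξ s _
    have h1 : HasDerivAt (fun u : ℝ => ξ + u) 1 s := (hasDerivAt_id s).const_add ξ
    have h2 := (hasDerivAt_erf (ξ + s)).comp s h1
    have h3 := h2.mul_const (g ξ)
    simpa [mul_one] using h3
  exact (hasDerivAt_integral_of_dominated_loc_of_deriv_le (ball_mem_nhds t zero_lt_one)
    (Eventually.of_forall hmeas) hFint hF'meas hbound hbint hdiff).2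

lemma erf_gauss_integral {p : ℝ} (hp : 0 < p) (q r b : ℝ) :
    ∫ ξ : ℝ, erf (ξ + b) * Real.exp (-p * ξ ^ 2 + q * ξ + r)
      = (Real.sqrt (π / p) * Real.exp (r + q ^ 2 / (4 * p))) *
        erf ((Real.sqrt p * b + q / (2 * Real.sqrt p)) / Real.sqrt (1 + p)) := by
  have hg_pos : ∀ ξ : ℝ, 0 < Real.exp (-p * ξ ^ 2 + q * ξ + r) := fun ξ => Real.exp_pos _
  have hg_int : Integrable (fun ξ : ℝ => Real.exp (-p * ξ ^ 2 + q * ξ + r)) :=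
    integrable_rexp_quad hp q r
  have hg_cont : Continuous (fun ξ : ℝ => Real.exp (-p * ξ ^ 2 + q * ξ + r)) := by fun_prop
  set C : ℝ := Real.sqrt (π / p) * Real.exp (r + q ^ 2 / (4 * p)) with hC
  have hintg : ∫ ξ : ℝ, Real.exp (-p * ξ ^ 2 + q * ξ + r) = C := integral_rexp_quad hp q r
  set sp : ℝ := Real.sqrt p with hsp
  have hsp_pos : 0 < sp := Real.sqrt_pos.2 hp
  have hsp_sq : sp ^ 2 = p := Real.sq_sqrt hp.le
  set s1 : ℝ := Real.sqrt (1 + p) with hs1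
  have hs1_pos : 0 < s1 := Real.sqrt_pos.2 (by linarith)
  have hs1_sq : s1 ^ 2 = 1 + p := Real.sq_sqrt (by linarith)
  set arg : ℝ → ℝ := fun t => (sp * t + q / (2 * sp)) / s1 with harg
  set F : ℝ → ℝ :=
    fun t => ∫ ξ : ℝ, erf (ξ + t) * Real.exp (-p * ξ ^ 2 + q * ξ + r) with hF
  set G : ℝ → ℝ := fun t => C * erf (arg t) with hG
  -- closed form for the derivative of F
  have hF'eq : ∀ t : ℝ,
      (∫ ξ : ℝ, (2 / Real.sqrt π * Real.exp (-(ξ + t) ^ 2)) *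
        Real.exp (-p * ξ ^ 2 + q * ξ + r))
      = 2 / Real.sqrt π * (Real.sqrt (π / (1 + p)) *
          Real.exp ((r - t ^ 2) + (q - 2 * t) ^ 2 / (4 * (1 + p)))) := by
    intro t
    have hrw : ∀ ξ : ℝ, (2 / Real.sqrt π * Real.exp (-(ξ + t) ^ 2)) *
        Real.exp (-p * ξ ^ 2 + q * ξ + r)
        = 2 / Real.sqrt π *
          Real.exp (-(1 + p) * ξ ^ 2 + (q - 2 * t) * ξ + (r - t ^ 2)) := by
      intro ξ
      rw [mul_assoc, ← Real.exp_add]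
      congr 2
      ring
    simp_rw [hrw]
    rw [MeasureTheory.integral_const_mul, integral_rexp_quad (by linarith : (0:ℝ) < 1 + p)]
  -- derivative of G
  set G' : ℝ → ℝ := fun t =>
    C * (2 / Real.sqrt π * Real.exp (-(arg t) ^ 2)) * (sp / s1) with hG'
  have hderivG : ∀ t : ℝ, HasDerivAt G (G' t) t := by
    intro t
    have h1 : HasDerivAt arg (sp / s1) t := by
      have h2 : HasDerivAt (fun u : ℝ => sp * u + q / (2 * sp)) sp t := by
        simpa using ((hasDerivAt_id t).const_mul sp).add_const (q / (2 * sp))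
      simpa using h2.div_const s1
    have h2 := (hasDerivAt_erf (arg t)).comp t h1
    have h3 := h2.const_mul C
    simpa [hG', mul_assoc, mul_comm, mul_left_comm] using h3
  -- F' = G'
  have hFG' : ∀ t : ℝ,
      2 / Real.sqrt π * (Real.sqrt (π / (1 + p)) *
          Real.exp ((r - t ^ 2) + (q - 2 * t) ^ 2 / (4 * (1 + p)))) = G' t := by
    intro t
    have hargsq : (arg t) ^ 2 = (p * t ^ 2 + q * t + q ^ 2 / (4 * p)) / (1 + p) := by
      rw [harg, div_pow, hs1_sq]
      congr 1
      have hsp_ne : sp ≠ 0 := hsp_pos.ne'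
      field_simp
      linear_combination (16 * p * t ^ 2 * sp ^ 2 - 4 * q ^ 2) * hsp_sq
    have hcoef : Real.sqrt (π / (1 + p)) = Real.sqrt (π / p) * (sp / s1) := by
      rw [hsp, hs1]
      rw [show π / (1 + p) = (π / p) * (p / (1 + p)) by field_simp,
        Real.sqrt_mul (by positivity)]
      congr 1
      exact Real.sqrt_div hp.le _
    have hexp : (r - t ^ 2) + (q - 2 * t) ^ 2 / (4 * (1 + p))
        = (r + q ^ 2 / (4 * p)) + (-(arg t) ^ 2) := by
      rw [hargsq]
      field_simp
      ring
    rw [hexp, hG', hC, Real.exp_add, hcoef]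
    ring
  -- F has derivative G'
  have hderivF : ∀ t : ℝ, HasDerivAt F (G' t) t := by
    intro t
    have h := hasDerivAt_F hp q r t
    rw [hF'eq t, hFG' t] at h
    exact h
  have hconst : ∀ s t : ℝ, F s - G s = F t - G t := by
    intro s t
    have hdiff : Differentiable ℝ (fun u => F u - G u) :=
      fun u => ((hderivF u).sub (hderivG u)).differentiableAt
    have hzero : ∀ u, deriv (fun u => F u - G u) u = 0 := by
      intro u
      have h := ((hderivF u).sub (hderivG u)).deriv
      exact h.trans (sub_self _)
    exact is_const_of_deriv_eq_zero hdiff hzero s t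
  -- limits at +∞
  have hmeas : ∀ s : ℝ, AEStronglyMeasurable
      (fun ξ : ℝ => erf (ξ + s) * Real.exp (-p * ξ ^ 2 + q * ξ + r)) volume :=
    fun s => ((continuous_erf.comp (continuous_id.add continuous_const)).mul
      hg_cont).aestronglyMeasurable
  have hFlim : Tendsto F atTop (nhds C) := by
    rw [← hintg]
    apply MeasureTheory.tendsto_integral_filter_of_dominated_convergence
      (fun ξ : ℝ => Real.exp (-p * ξ ^ 2 + q * ξ + r))
      (Eventually.of_forall hmeas)
    · filter_upwards with s
      filter_upwards with ξ
      rw [norm_mul, Real.norm_eq_abs, Real.norm_eq_abs, abs_of_pos (hg_pos ξ)]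
      exact mul_le_of_le_one_left (hg_pos ξ).le (abs_erf_le_one _)
    · exact hg_int
    · filter_upwards with ξ
      have h1 : Tendsto (fun s : ℝ => ξ + s) atTop atTop :=
        tendsto_atTop_add_const_left atTop ξ tendsto_id
      have h2 := (tendsto_erf_atTop.comp h1).mul_const
        (Real.exp (-p * ξ ^ 2 + q * ξ + r))
      simpa using h2
  have hGlim : Tendsto G atTop (nhds C) := by
    have h1 : Tendsto (fun t : ℝ => sp * t) atTop atTop :=
      Tendsto.const_mul_atTop hsp_pos tendsto_id
    have h2 : Tendsto (fun t : ℝ => sp * t + q / (2 * sp)) atTop atTop :=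
      tendsto_atTop_add_const_right atTop _ h1
    have h3 : Tendsto arg atTop atTop := h2.atTop_div_const hs1_pos
    have h4 := (tendsto_erf_atTop.comp h3).const_mul C
    simpa using h4
  have h0 : Tendsto (fun t => F t - G t) atTop (nhds 0) := by
    simpa using hFlim.sub hGlim
  have heqconst : (fun t => F t - G t) = fun _ => F b - G b :=
    funext fun t => hconst t b
  rw [heqconst] at h0
  have hzero : F b - G b = 0 := tendsto_nhds_unique tendsto_const_nhds h0
  have hFb : F b = G b := sub_eq_zero.mp hzero
  exact hFb

lemma integrable_erf_gauss {p : ℝ} (hp : 0 < p) (q r b : ℝ) :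
    Integrable fun ξ : ℝ => erf (ξ + b) * Real.exp (-p * ξ ^ 2 + q * ξ + r) := by
  refine (integrable_rexp_quad hp q r).mono'
    (((continuous_erf.comp (continuous_id.add continuous_const)).mul
      (by fun_prop)).aestronglyMeasurable) ?_
  filter_upwards with ξ
  rw [norm_mul, Real.norm_eq_abs, Real.norm_eq_abs, abs_of_pos (Real.exp_pos _)]
  exact mul_le_of_le_one_left (Real.exp_pos _).le (abs_erf_le_one _)

lemma Iv1_key (ε εbar σ Δτ b x x_k : ℝ)
    (hε : 0 < ε) (hεbar : 0 < εbar) (hσ : 0 < σ) (hΔτ : 0 < Δτ) :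
    -(∫ ξ : ℝ,
        (1 - (1 / (2 * εbar)) * (1 - erf (ξ + b))) *
          (Real.exp (-ε * (ξ - x_k) ^ 2 - (x - ξ) ^ 2 / (2 * σ ^ 2 * Δτ) - ξ) /
            (σ * Real.sqrt (2 * π * Δτ))))
      = -(1 - 1 / (2 * εbar)) *
          ((1 / Real.sqrt (1 + 2 * ε * σ ^ 2 * Δτ)) * Real.exp (σ ^ 2 * Δτ / 2 - x) *
            Real.exp (-ε * (x - σ ^ 2 * Δτ - x_k) ^ 2 / Real.sqrt (1 + 2 * ε * σ ^ 2 * Δτ) ^ 2))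
        - (1 / (2 * εbar)) *
          (((1 / Real.sqrt (1 + 2 * ε * σ ^ 2 * Δτ)) * Real.exp (σ ^ 2 * Δτ / 2 - x) *
            Real.exp (-ε * (x - σ ^ 2 * Δτ - x_k) ^ 2 / Real.sqrt (1 + 2 * ε * σ ^ 2 * Δτ) ^ 2)) *
            erf ((Real.sqrt (1 + 2 * ε * σ ^ 2 * Δτ) / (σ * Real.sqrt (2 * Δτ)) * b -
                (σ ^ 2 * Δτ - x - 2 * ε * σ ^ 2 * Δτ * x_k) /
                  (Real.sqrt (1 + 2 * ε * σ ^ 2 * Δτ) * σ * Real.sqrt (2 * Δτ))) /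
              Real.sqrt (1 + (Real.sqrt (1 + 2 * ε * σ ^ 2 * Δτ) / (σ * Real.sqrt (2 * Δτ))) ^ 2))) := by
  have hs2 : 0 < σ ^ 2 * Δτ := by positivity
  set s2 : ℝ := σ ^ 2 * Δτ with hs2def
  set p : ℝ := ε + 1 / (2 * s2) with hpdef
  have hp : 0 < p := by positivity
  set q : ℝ := 2 * ε * x_k + x / s2 - 1 with hqdef
  set r : ℝ := -ε * x_k ^ 2 - x ^ 2 / (2 * s2) with hrdef
  set c : ℝ := 1 / (2 * εbar) with hcdef
  set D : ℝ := σ * Real.sqrt (2 * π * Δτ) with hDdef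
  have hD : 0 < D := by positivity
  set a : ℝ := Real.sqrt (1 + 2 * ε * s2) with hadef
  have ha : 0 < a := Real.sqrt_pos.2 (by positivity)
  have ha_sq : a ^ 2 = 1 + 2 * ε * s2 := Real.sq_sqrt (by positivity)
  set sq2 : ℝ := Real.sqrt (2 * Δτ) with hsq2def
  have hsq2 : 0 < sq2 := Real.sqrt_pos.2 (by positivity)
  have hsq2_sq : sq2 ^ 2 = 2 * Δτ := Real.sq_sqrt (by positivity)
  set α : ℝ := a / (σ * sq2) with hαdef
  have hα : 0 < α := by positivity
  have hα_sq : α ^ 2 = p := by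
    rw [hαdef, div_pow, mul_pow, hsq2_sq, ha_sq, hpdef, hs2def]
    field_simp
    ring
  set β : ℝ := (s2 - x - 2 * ε * s2 * x_k) / (a * σ * sq2) with hβdef
  have hαβ : α * β = -q / 2 := by
    have h1 : α * β = (s2 - x - 2 * ε * s2 * x_k) / (2 * s2) := by
      rw [hαdef, hβdef, div_mul_div_comm,
        show σ * sq2 * (a * σ * sq2) = a * (2 * s2) by
          rw [hs2def]; linear_combination (a * σ ^ 2) * hsq2_sq,
        mul_div_mul_left _ _ ha.ne']
    have hs2ne : s2 ≠ 0 := hs2.ne'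
    rw [h1, hqdef]
    field_simp
    ring
  -- the exponent rewrite
  have hEQ : ∀ ξ : ℝ, -ε * (ξ - x_k) ^ 2 - (x - ξ) ^ 2 / (2 * σ ^ 2 * Δτ) - ξ
      = -p * ξ ^ 2 + q * ξ + r := by
    intro ξ
    rw [hpdef, hqdef, hrdef, hs2def]
    field_simp
    ring
  -- split the integral
  have hsplit : (∫ ξ : ℝ,
      (1 - c * (1 - erf (ξ + b))) *
        (Real.exp (-ε * (ξ - x_k) ^ 2 - (x - ξ) ^ 2 / (2 * σ ^ 2 * Δτ) - ξ) / D))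
      = (1 - c) * (1 / D) * (∫ ξ : ℝ, Real.exp (-p * ξ ^ 2 + q * ξ + r))
        + c * (1 / D) * (∫ ξ : ℝ, erf (ξ + b) * Real.exp (-p * ξ ^ 2 + q * ξ + r)) := by
    rw [← MeasureTheory.integral_const_mul, ← MeasureTheory.integral_const_mul,
      ← MeasureTheory.integral_add
        (((integrable_rexp_quad hp q r).const_mul _))
        (((integrable_erf_gauss hp q r b).const_mul _))]
    congr 1
    funext ξ
    rw [hEQ ξ]
    ring
  rw [hsplit, integral_rexp_quad hp q r, erf_gauss_integral hp q r b]
  -- identify the closed forms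
  have hsqp : Real.sqrt p = α := by
    rw [← hα_sq, Real.sqrt_sq hα.le]
  have hC : (1 / D) * (Real.sqrt (π / p) * Real.exp (r + q ^ 2 / (4 * p)))
      = (1 / a) * Real.exp (s2 / 2 - x) *
          Real.exp (-ε * (x - s2 - x_k) ^ 2 / a ^ 2) := by
    have h1 : Real.sqrt (π / p) = D / a := by
      have h2 : π / p = (σ ^ 2 * (2 * π * Δτ)) / a ^ 2 := by
        rw [ha_sq, hpdef, hs2def]
        field_simp
        try ring
      rw [h2, Real.sqrt_div (by positivity), Real.sqrt_sq ha.le,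
        Real.sqrt_mul (by positivity), Real.sqrt_sq hσ.le, ← hDdef]
    have h3 : r + q ^ 2 / (4 * p) = (s2 / 2 - x) + (-ε * (x - s2 - x_k) ^ 2 / a ^ 2) := by
      rw [ha_sq, hpdef, hqdef, hrdef]
      field_simp
      ring
    rw [h1, h3, Real.exp_add]
    field_simp
    try ring
  have hARG : (Real.sqrt p * b + q / (2 * Real.sqrt p)) / Real.sqrt (1 + p)
      = (α * b - β) / Real.sqrt (1 + α ^ 2) := by
    rw [hsqp, hα_sq]
    congr 1
    have hβ' : β = -q / (2 * α) := by
      field_simp at hαβ ⊢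
      linarith [hαβ]
    rw [hβ']
    field_simp
    ring
  have haa : Real.sqrt (1 + 2 * ε * σ ^ 2 * Δτ) = a := by
    rw [hadef]
    congr 1
    rw [hs2def]
    ring
  have hnum : σ ^ 2 * Δτ - x - 2 * ε * σ ^ 2 * Δτ * x_k = s2 - x - 2 * ε * s2 * x_k := by
    rw [hs2def]
    ring
  rw [hARG, haa, hnum, ← hαdef, ← hβdef, ← hC]
  ring

/-- Proposition 1: closed form for the integral `I_{v,1}`. -/
theorem Iv1_closed_form
    (ε εbar σ Δτ b x x_k : ℝ)
    (hε : 0 < ε) (hεbar : 0 < εbar) (hσ : 0 < σ) (hΔτ : 0 < Δτ) :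
    let a := Real.sqrt (1 + 2 * ε * σ ^ 2 * Δτ)
    let α := a / (σ * Real.sqrt (2 * Δτ))
    let β := (σ ^ 2 * Δτ - x - 2 * ε * σ ^ 2 * Δτ * x_k) / (a * σ * Real.sqrt (2 * Δτ))
    let I1 := (1 / a) * Real.exp (σ ^ 2 * Δτ / 2 - x) *
        Real.exp (-ε * (x - σ ^ 2 * Δτ - x_k) ^ 2 / a ^ 2)
    let I2 := I1 * erf ((α * b - β) / Real.sqrt (1 + α ^ 2));
    -(∫ ξ : ℝ,
        (1 - (1 / (2 * εbar)) * (1 - erf (ξ + b))) *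
          (Real.exp (-ε * (ξ - x_k) ^ 2 - (x - ξ) ^ 2 / (2 * σ ^ 2 * Δτ) - ξ) /
            (σ * Real.sqrt (2 * π * Δτ))))
      = -(1 - 1 / (2 * εbar)) * I1 - (1 / (2 * εbar)) * I2 := by
  intro a α β I1 I2
  exact Iv1_key ε εbar σ Δτ b x x_k hε hεbar hσ hΔτ
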